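/- arXiv:1402.1441 — 5 statements merged into one kernel-verified Lean document; each statement's English description precedes it below -/
import Mathlib

section
/- With d, μ, ν, λ fixed and D varying, as D → +∞: (a) the unique zero s₀(D) ∈ (0,1) of Φ_D tends to 1, equivalently θ₀(D) = arccos s₀(D) → 0; (b) for every θ ∈ (−π/2, π/2), w_*(θ; D) → c_K/cosθ, and w_*(±π/2; D) → +∞. -/
open Real Set

noncomputable section

/-- χ(s) = μ s / (ν + s). -/
def chiF (μ ν s : ℝ) : ℝ := μ * s / (ν + s)

/-- The set S(c) of points (β, α) with β > -ν/d and
c ξ₁ α + c ξ₂ β − D α² + χ(dβ) ≥ 0. -/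
def Sset (d D μ ν ξ1 ξ2 c : ℝ) : Set (ℝ × ℝ) :=
  {p : ℝ × ℝ | -(ν / d) < p.1 ∧
    0 ≤ c * ξ1 * p.2 + c * ξ2 * p.1 - D * p.2 ^ 2 + chiF μ ν (d * p.1)}

/-- The set G(c) of points (β, α) with c ξ₁ α + c ξ₂ β − d(α² + β²) ≥ λ. -/
def Gset (d lam ξ1 ξ2 c : ℝ) : Set (ℝ × ℝ) :=
  {p : ℝ × ℝ | lam ≤ c * ξ1 * p.2 + c * ξ2 * p.1 - d * (p.2 ^ 2 + p.1 ^ 2)}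

/-- w_*(ξ): the least c > 0 such that S(c) ∩ G(c) ≠ ∅. -/
def wstar (d D μ ν lam ξ1 ξ2 : ℝ) : ℝ :=
  sInf {c : ℝ | 0 < c ∧ (Sset d D μ ν ξ1 ξ2 c ∩ Gset d lam ξ1 ξ2 c).Nonempty}

/-- w_*(θ) := w_*((sin|θ|, cos|θ|)). -/
def wtheta (d D μ ν lam θ : ℝ) : ℝ :=
  wstar d D μ ν lam (Real.sin |θ|) (Real.cos |θ|)

/-- Φ(s) = 2d + D(s² − 1) + 4d²μs/(2νc_K + c_K²s). -/
def PhiF (d D μ ν cK s : ℝ) : ℝ :=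
  2 * d + D * (s ^ 2 - 1) + 4 * d ^ 2 * μ * s / (2 * ν * cK + cK ^ 2 * s)

lemma chiF_nonneg (μ ν s : ℝ) (hμ : 0 < μ) (hν : 0 < ν) (hs : 0 ≤ s) : 0 ≤ chiF μ ν s := by
  unfold chiF; positivity

lemma chiF_le_mu (μ ν s : ℝ) (hμ : 0 < μ) (hν : 0 < ν) (hs : 0 < ν + s) : chiF μ ν s ≤ μ := by
  unfold chiF
  rw [div_le_iff₀ hs]; nlinarith

lemma set_upward (d D μ ν lam ξ1 ξ2 c c' : ℝ) (hd : 0 < d) (hlam : 0 < lam)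
    (hc : 0 < c) (hcc' : c ≤ c')
    (h : (Sset d D μ ν ξ1 ξ2 c ∩ Gset d lam ξ1 ξ2 c).Nonempty) :
    (Sset d D μ ν ξ1 ξ2 c' ∩ Gset d lam ξ1 ξ2 c').Nonempty := by
  obtain ⟨p, hS, hG⟩ := h
  obtain ⟨hS1, hS2⟩ := hS
  simp only [Gset, Set.mem_setOf_eq] at hG
  have hL : 0 < ξ1 * p.2 + ξ2 * p.1 := by
    by_contra h'
    push_neg at h'
    have h1 : 0 ≤ c * (-(ξ1 * p.2 + ξ2 * p.1)) := mul_nonneg hc.le (by linarith)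
    nlinarith [sq_nonneg p.1, sq_nonneg p.2]
  have hkey : c * ξ1 * p.2 + c * ξ2 * p.1 ≤ c' * ξ1 * p.2 + c' * ξ2 * p.1 := by
    nlinarith [mul_nonneg (sub_nonneg.2 hcc') hL.le]
  refine ⟨p, ⟨hS1, by linarith⟩, by show lam ≤ _; linarith⟩

lemma mem_set (d D μ ν lam ξ1 ξ2 c : ℝ) (hd : 0 < d) (hμ : 0 < μ) (hν : 0 < ν)
    (hc : 0 < c) (hξ2 : 0 < ξ2) (hkey : 4 * d * lam ≤ (c * ξ2) ^ 2) :
    (Sset d D μ ν ξ1 ξ2 c ∩ Gset d lam ξ1 ξ2 c).Nonempty := by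
  refine ⟨(c * ξ2 / (2 * d), 0), ⟨?_, ?_⟩, ?_⟩
  · show -(ν / d) < c * ξ2 / (2 * d)
    have h1 : 0 < c * ξ2 / (2 * d) := by positivity
    have h2 : 0 < ν / d := by positivity
    linarith
  · show (0:ℝ) ≤ c * ξ1 * 0 + c * ξ2 * (c * ξ2 / (2 * d)) - D * 0 ^ 2
      + chiF μ ν (d * (c * ξ2 / (2 * d)))
    have h1 : 0 ≤ chiF μ ν (d * (c * ξ2 / (2 * d))) := chiF_nonneg _ _ _ hμ hν (by positivity)
    have h2 : 0 < c * ξ2 * (c * ξ2 / (2 * d)) := by positivity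
    linarith
  · show lam ≤ c * ξ1 * 0 + c * ξ2 * (c * ξ2 / (2 * d)) - d * (0 ^ 2 + (c * ξ2 / (2 * d)) ^ 2)
    have expand : c * ξ1 * 0 + c * ξ2 * (c * ξ2 / (2 * d)) - d * (0 ^ 2 + (c * ξ2 / (2 * d)) ^ 2)
        = (c * ξ2) ^ 2 / (4 * d) := by
      field_simp
      ring
    rw [expand, le_div_iff₀ (show (0:ℝ) < 4 * d by positivity)]
    linarith

lemma quad_bound (x c : ℝ) (hc : 0 < c) (hx : 0 ≤ x) (h : 4 * x ^ 2 ≤ 4 * c * x + c ^ 2) :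
    x ≤ 2 * c := by
  nlinarith [sq_nonneg (x - 2 * c), mul_pos hc hc]

set_option maxHeartbeats 800000 in
lemma empty_set (d D μ ν lam ξ1 ξ2 M c : ℝ) (hd : 0 < d) (hμ : 0 < μ) (hν : 0 < ν)
    (hlam : 0 < lam) (hξ1 : 0 ≤ ξ1) (hξ1' : ξ1 ≤ 1) (hξ2 : 0 ≤ ξ2) (hξ2' : ξ2 ≤ 1)
    (hc : 0 < c) (hcM : c ≤ M) (hD : 0 < D)
    (hkey : M * Real.sqrt ((4 * M ^ 2 / d + μ) / D) + (c * ξ2) ^ 2 / (4 * d) < lam) :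
    ¬ (Sset d D μ ν ξ1 ξ2 c ∩ Gset d lam ξ1 ξ2 c).Nonempty := by
  rintro ⟨⟨β, α⟩, ⟨hS1, hS2⟩, hG⟩
  have hS1' : -(ν / d) < β := hS1
  have hS2' : 0 ≤ c * ξ1 * α + c * ξ2 * β - D * α ^ 2 + chiF μ ν (d * β) := hS2
  have hG' : lam ≤ c * ξ1 * α + c * ξ2 * β - d * (α ^ 2 + β ^ 2) := hG
  clear hS1 hS2 hG
  have h1 : ξ1 * α ≤ |α| := by
    nlinarith [mul_nonneg hξ1 (sub_nonneg.2 (le_abs_self α)),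
      mul_nonneg (sub_nonneg.2 hξ1') (abs_nonneg α)]
  have h2 : ξ2 * β ≤ |β| := by
    nlinarith [mul_nonneg hξ2 (sub_nonneg.2 (le_abs_self β)),
      mul_nonneg (sub_nonneg.2 hξ2') (abs_nonneg β)]
  have e1 : c * (ξ1 * α) ≤ c * |α| := mul_le_mul_of_nonneg_left h1 hc.le
  have e2 : c * (ξ2 * β) ≤ c * |β| := mul_le_mul_of_nonneg_left h2 hc.le
  have hg2 : d * (α ^ 2 + β ^ 2) ≤ c * |α| + c * |β| := by nlinarith
  have hg3 : d * (d * (α ^ 2 + β ^ 2)) ≤ d * (c * |α| + c * |β|) :=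
    mul_le_mul_of_nonneg_left hg2 hd.le
  have sa : (d * |α|) ^ 2 = d ^ 2 * α ^ 2 := by rw [mul_pow, sq_abs]
  have sb : (d * |β|) ^ 2 = d ^ 2 * β ^ 2 := by rw [mul_pow, sq_abs]
  have keyα : 4 * (d * |α|) ^ 2 ≤ 4 * c * (d * |α|) + c ^ 2 := by
    linarith [sq_nonneg (2 * (d * |β|) - c), hg3, sa, sb]
  have keyβ : 4 * (d * |β|) ^ 2 ≤ 4 * c * (d * |β|) + c ^ 2 := by
    linarith [sq_nonneg (2 * (d * |α|) - c), hg3, sa, sb]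
  have hαb : d * |α| ≤ 2 * c := quad_bound _ _ hc (by positivity) keyα
  have hβb : d * |β| ≤ 2 * c := quad_bound _ _ hc (by positivity) keyβ
  have hνβ : 0 < ν + d * β := by
    have h' : -ν / d < β := by rwa [← neg_div] at hS1'
    have := (div_lt_iff₀ hd).mp h'
    linarith
  have hχ : chiF μ ν (d * β) ≤ μ := chiF_le_mu μ ν _ hμ hν hνβ
  have e3 : d * (c * |α|) ≤ 2 * c ^ 2 := by
    linarith [mul_le_mul_of_nonneg_left hαb hc.le]
  have e4 : d * (c * |β|) ≤ 2 * c ^ 2 := by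
    linarith [mul_le_mul_of_nonneg_left hβb hc.le]
  have h5 : D * α ^ 2 ≤ c * (ξ1 * α) + c * (ξ2 * β) + chiF μ ν (d * β) := by linarith
  have h6 : d * (D * α ^ 2) ≤ d * (c * (ξ1 * α) + c * (ξ2 * β) + chiF μ ν (d * β)) :=
    mul_le_mul_of_nonneg_left h5 hd.le
  have hcM2 : c ^ 2 ≤ M ^ 2 := by nlinarith
  have hDα : d * (D * α ^ 2) ≤ 4 * M ^ 2 + d * μ := by
    linarith [mul_le_mul_of_nonneg_left e1 hd.le, mul_le_mul_of_nonneg_left e2 hd.le,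
      e3, e4, mul_le_mul_of_nonneg_left hχ hd.le, h6]
  have hα2 : α ^ 2 ≤ (4 * M ^ 2 / d + μ) / D := by
    rw [le_div_iff₀ hD, div_add' _ _ _ hd.ne', le_div_iff₀ hd]
    linarith
  have hαs : |α| ≤ Real.sqrt ((4 * M ^ 2 / d + μ) / D) := Real.abs_le_sqrt hα2
  have hquad : c * (ξ2 * β) - d * β ^ 2 ≤ (c * ξ2) ^ 2 / (4 * d) := by
    rw [le_div_iff₀ (show (0:ℝ) < 4 * d by positivity)]
    nlinarith [sq_nonneg (2 * d * β - c * ξ2)]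
  have hfin : lam ≤ c * |α| + (c * ξ2) ^ 2 / (4 * d) := by
    linarith [e1, hquad, mul_nonneg hd.le (sq_nonneg α)]
  have hfin2 : c * |α| ≤ M * Real.sqrt ((4 * M ^ 2 / d + μ) / D) :=
    mul_le_mul hcM hαs (abs_nonneg α) (hc.le.trans hcM)
  linarith


lemma mem_pi2 (d D μ ν lam : ℝ) (hd : 0 < d) (hμ : 0 < μ) (hν : 0 < ν) (hlam : 0 < lam)
    (hD : 0 ≤ D) :
    0 < Real.sqrt (2 * D * lam) + 2 * Real.sqrt (d * lam) ∧
    ((Sset d D μ ν 1 0 (Real.sqrt (2 * D * lam) + 2 * Real.sqrt (d * lam)) ∩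
      Gset d lam 1 0 (Real.sqrt (2 * D * lam) + 2 * Real.sqrt (d * lam))).Nonempty) := by
  set c := Real.sqrt (2 * D * lam) + 2 * Real.sqrt (d * lam) with hcdef
  have hc1 : 0 < c := by positivity
  have hsq1 : 2 * D * lam ≤ c ^ 2 := by
    nlinarith [Real.sq_sqrt (show (0:ℝ) ≤ 2 * D * lam by positivity),
      Real.sqrt_nonneg (2 * D * lam), Real.sqrt_nonneg (d * lam)]
  have hsq2 : 4 * d * lam ≤ c ^ 2 := by
    nlinarith [Real.sq_sqrt (show (0:ℝ) ≤ d * lam by positivity),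
      Real.sqrt_nonneg (2 * D * lam), Real.sqrt_nonneg (d * lam)]
  refine ⟨hc1, ⟨(0, 2 * lam / c), ⟨?_, ?_⟩, ?_⟩⟩
  · show -(ν / d) < (0:ℝ)
    have : 0 < ν / d := by positivity
    linarith
  · show (0:ℝ) ≤ c * 1 * (2 * lam / c) + c * 0 * 0 - D * (2 * lam / c) ^ 2 + chiF μ ν (d * 0)
    have hχ : chiF μ ν (d * 0) = 0 := by simp [chiF]
    have h1 : c * 1 * (2 * lam / c) = 2 * lam := by field_simp
    have h2 : D * (2 * lam / c) ^ 2 ≤ 2 * lam := by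
      rw [div_pow, ← mul_div_assoc, div_le_iff₀ (by positivity : (0:ℝ) < c ^ 2)]
      nlinarith [mul_le_mul_of_nonneg_left hsq1 hlam.le]
    rw [hχ, h1]
    linarith
  · show lam ≤ c * 1 * (2 * lam / c) + c * 0 * 0 - d * ((2 * lam / c) ^ 2 + 0 ^ 2)
    have h1 : c * 1 * (2 * lam / c) = 2 * lam := by field_simp
    have h2 : d * (2 * lam / c) ^ 2 ≤ lam := by
      rw [div_pow, ← mul_div_assoc, div_le_iff₀ (by positivity : (0:ℝ) < c ^ 2)]
      nlinarith [mul_le_mul_of_nonneg_left hsq2 hlam.le]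
    rw [h1]
    linarith
  
lemma tendsto_g (C M : ℝ) :
    Filter.Tendsto (fun D : ℝ => M * Real.sqrt (C / D)) Filter.atTop (nhds 0) := by
  have h1 : Filter.Tendsto (fun D : ℝ => C / D) Filter.atTop (nhds 0) :=
    Filter.Tendsto.div_atTop tendsto_const_nhds Filter.tendsto_id
  have h2 := (Real.continuous_sqrt.tendsto 0).comp h1
  rw [Real.sqrt_zero] at h2
  have h3 := h2.const_mul M
  simpa using h3


lemma key_tendsto (d μ ν lam ξ1 ξ2 : ℝ) (hd : 0 < d) (hμ : 0 < μ) (hν : 0 < ν) (hlam : 0 < lam)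
    (hξ1 : 0 ≤ ξ1) (hξ1' : ξ1 ≤ 1) (hξ2 : 0 < ξ2) (hξ2' : ξ2 ≤ 1) :
    Filter.Tendsto (fun D => wstar d D μ ν lam ξ1 ξ2) Filter.atTop
      (nhds (2 * Real.sqrt (d * lam) / ξ2)) := by
  set cK := 2 * Real.sqrt (d * lam) with hcKdef
  have hcK : 0 < cK := by positivity
  have hcK2 : cK ^ 2 = 4 * d * lam := by
    rw [hcKdef, mul_pow, Real.sq_sqrt (le_of_lt (by positivity : (0:ℝ) < d * lam))]; ring
  set L := cK / ξ2 with hLdef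
  have hL : 0 < L := by positivity
  have hLξ2 : L * ξ2 = cK := div_mul_cancel₀ cK hξ2.ne'
  have hLA : ∀ D : ℝ, L ∈ {c : ℝ | 0 < c ∧
      (Sset d D μ ν ξ1 ξ2 c ∩ Gset d lam ξ1 ξ2 c).Nonempty} := fun D =>
    ⟨hL, mem_set d D μ ν lam ξ1 ξ2 L hd hμ hν hL hξ2 (by rw [hLξ2]; linarith [hcK2])⟩
  have hbdd : ∀ D : ℝ, BddBelow {c : ℝ | 0 < c ∧
      (Sset d D μ ν ξ1 ξ2 c ∩ Gset d lam ξ1 ξ2 c).Nonempty} := fun D =>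
    ⟨0, fun x hx => hx.1.le⟩
  have hub : ∀ D : ℝ, wstar d D μ ν lam ξ1 ξ2 ≤ L := by
    intro D; unfold wstar; exact csInf_le (hbdd D) (hLA D)
  have hlb0 : ∀ D : ℝ, 0 ≤ wstar d D μ ν lam ξ1 ξ2 := by
    intro D; unfold wstar; exact le_csInf ⟨L, hLA D⟩ (fun x hx => hx.1.le)
  rw [Metric.tendsto_nhds]
  intro ε hε
  rcases le_or_gt L (ε / 2) with hcase | hcase
  · filter_upwards with D
    rw [Real.dist_eq, abs_lt]
    constructor
    · linarith [hlb0 D]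
    · linarith [hub D]
  · set c₀ := L - ε / 2 with hc₀def
    have hc₀ : 0 < c₀ := by rw [hc₀def]; linarith
    have hc₀ξ : 0 < c₀ * ξ2 := by positivity
    have hc₀ξlt : c₀ * ξ2 < cK := by
      have h1 : c₀ * ξ2 = L * ξ2 - ε / 2 * ξ2 := by rw [hc₀def]; ring
      have h2 : 0 < ε / 2 * ξ2 := by positivity
      rw [h1, hLξ2]; linarith
    have hδ : 0 < lam - (c₀ * ξ2) ^ 2 / (4 * d) := by
      have h3 : (c₀ * ξ2) ^ 2 < 4 * d * lam := by nlinarith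
      have h4 : (c₀ * ξ2) ^ 2 / (4 * d) < lam := by
        rw [div_lt_iff₀ (show (0:ℝ) < 4 * d by positivity)]; linarith
      linarith
    have hev := (tendsto_g (4 * L ^ 2 / d + μ) L).eventually (eventually_lt_nhds hδ)
    filter_upwards [hev, Filter.eventually_gt_atTop (0:ℝ)] with D hgD hD
    have hempty := empty_set d D μ ν lam ξ1 ξ2 L c₀ hd hμ hν hlam hξ1 hξ1' hξ2.le hξ2' hc₀
      (by rw [hc₀def]; linarith) hD (by linarith)
    have hlb : c₀ ≤ wstar d D μ ν lam ξ1 ξ2 := by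
      unfold wstar
      apply le_csInf ⟨L, hLA D⟩
      intro x hx
      by_contra hx'
      push_neg at hx'
      exact hempty (set_upward d D μ ν lam ξ1 ξ2 x c₀ hd hlam hx.1 hx'.le hx.2)
    rw [hc₀def] at hlb
    rw [Real.dist_eq, abs_lt]
    constructor
    · linarith
    · linarith [hub D]

lemma key_tendsto_pi2 (d μ ν lam : ℝ) (hd : 0 < d) (hμ : 0 < μ) (hν : 0 < ν)
    (hlam : 0 < lam) :
    Filter.Tendsto (fun D => wstar d D μ ν lam 1 0) Filter.atTop Filter.atTop := by
  rw [Filter.tendsto_atTop]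
  intro b
  set M := max b 1 with hMdef
  have hM1 : 0 < M := lt_of_lt_of_le one_pos (le_max_right b 1)
  have hev := (tendsto_g (4 * M ^ 2 / d + μ) M).eventually (eventually_lt_nhds hlam)
  filter_upwards [hev, Filter.eventually_gt_atTop (0:ℝ)] with D hgD hD
  have hne := mem_pi2 d D μ ν lam hd hμ hν hlam hD.le
  have hkey : M * Real.sqrt ((4 * M ^ 2 / d + μ) / D) + (M * 0) ^ 2 / (4 * d) < lam := by
    have h0 : ((M:ℝ) * 0) ^ 2 / (4 * d) = 0 := by simp
    rw [h0]; linarith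
  have hempty := empty_set d D μ ν lam 1 0 M M hd hμ hν hlam zero_le_one le_rfl le_rfl
    zero_le_one hM1 le_rfl hD hkey
  have hMle : M ≤ wstar d D μ ν lam 1 0 := by
    unfold wstar
    refine le_csInf ⟨_, hne.1, hne.2⟩ fun x hx => ?_
    by_contra hx'
    push_neg at hx'
    exact hempty (set_upward d D μ ν lam 1 0 x M hd hlam hx.1 hx'.le hx.2)
  exact le_trans (le_max_left b 1) hMle


set_option maxHeartbeats 1600000 in
theorem statement2
    (d μ ν lam : ℝ) (hd : 0 < d) (hμ : 0 < μ) (hν : 0 < ν) (hlam : 0 < lam)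
    (s₀ : ℝ → ℝ)
    (hs₀ : ∀ D : ℝ, 2 * d < D →
      s₀ D ∈ Ioo (0:ℝ) 1 ∧
      PhiF d D μ ν (2 * Real.sqrt (d * lam)) (s₀ D) = 0) :
    -- (a) s₀(D) → 1, equivalently θ₀(D) = arccos s₀(D) → 0, as D → ∞
    Filter.Tendsto s₀ Filter.atTop (nhds 1) ∧
    Filter.Tendsto (fun D => Real.arccos (s₀ D)) Filter.atTop (nhds 0) ∧
    -- (b) w_*(θ; D) → c_K / cos θ for |θ| < π/2, and w_*(±π/2; D) → +∞
    (∀ θ ∈ Ioo (-(π/2)) (π/2),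
      Filter.Tendsto (fun D => wtheta d D μ ν lam θ) Filter.atTop
        (nhds (2 * Real.sqrt (d * lam) / Real.cos θ))) ∧
    Filter.Tendsto (fun D => wtheta d D μ ν lam (π/2)) Filter.atTop Filter.atTop ∧
    Filter.Tendsto (fun D => wtheta d D μ ν lam (-(π/2))) Filter.atTop Filter.atTop := by
  have hdl : (0:ℝ) < d * lam := by positivity
  set cK := 2 * Real.sqrt (d * lam) with hcKdef
  have hcK : 0 < cK := by positivity
  have hcK2 : cK ^ 2 = 4 * d * lam := by
    rw [hcKdef, mul_pow, Real.sq_sqrt hdl.le]; ring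
  set K := 2 * d + 2 * d ^ 2 * μ / (ν * cK) with hKdef
  have hK : 0 < K := by positivity
  have hlow : ∀ D : ℝ, 2 * d < D → 1 - K / D ≤ s₀ D := by
    intro D hD
    obtain ⟨⟨hs0, hs1⟩, hPhi⟩ := hs₀ D hD
    simp only [PhiF] at hPhi
    set s := s₀ D with hsdef
    have hden : 0 < 2 * ν * cK + cK ^ 2 * s := by positivity
    set T := 4 * d ^ 2 * μ * s / (2 * ν * cK + cK ^ 2 * s) with hTdef
    have hT0 : 0 ≤ T := by positivity
    have hTle : T ≤ 2 * d ^ 2 * μ / (ν * cK) := by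
      rw [hTdef, div_le_div_iff₀ hden (by positivity)]
      have k1 : 0 ≤ 4 * d ^ 2 * μ * (ν * cK) * (1 - s) := by
        apply mul_nonneg _ (by linarith)
        positivity
      have k2 : 0 ≤ 2 * d ^ 2 * μ * (cK ^ 2 * s) := by positivity
      nlinarith [k1, k2]
    have hPhi' : D * (1 - s ^ 2) = 2 * d + T := by
      rw [hTdef]; linarith [hPhi]
    have hD0 : 0 < D := lt_trans (by positivity) hD
    have h1 : D * (1 - s ^ 2) ≤ K := by rw [hKdef]; linarith
    have h2 : 1 - s ^ 2 ≤ K / D := by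
      rw [le_div_iff₀ hD0]; linarith
    have h3 : s ^ 2 ≤ s := by nlinarith
    linarith
  have haux : Filter.Tendsto (fun D : ℝ => 1 - K / D) Filter.atTop (nhds 1) := by
    have h1 : Filter.Tendsto (fun D : ℝ => K / D) Filter.atTop (nhds 0) :=
      Filter.Tendsto.div_atTop tendsto_const_nhds Filter.tendsto_id
    have h2 := (tendsto_const_nhds (x := (1:ℝ)) (f := Filter.atTop)).sub h1
    simpa using h2
  have hA : Filter.Tendsto s₀ Filter.atTop (nhds 1) := by
    apply tendsto_of_tendsto_of_tendsto_of_le_of_le' haux tendsto_const_nhds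
    · filter_upwards [Filter.eventually_gt_atTop (2 * d)] with D hD using hlow D hD
    · filter_upwards [Filter.eventually_gt_atTop (2 * d)] with D hD using ((hs₀ D hD).1.2).le
  have hA2 : Filter.Tendsto (fun D => Real.arccos (s₀ D)) Filter.atTop (nhds 0) := by
    have h1 := (Real.continuous_arccos.tendsto 1).comp hA
    simpa [Function.comp_def, Real.arccos_one] using h1
  refine ⟨hA, hA2, ?_, ?_, ?_⟩
  · intro θ hθ
    have hθabs : |θ| < π / 2 := abs_lt.2 ⟨hθ.1, hθ.2⟩
    have hcos : 0 < Real.cos |θ| :=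
      Real.cos_pos_of_mem_Ioo ⟨by linarith [abs_nonneg θ, Real.pi_pos], hθabs⟩
    have hsin : 0 ≤ Real.sin |θ| :=
      Real.sin_nonneg_of_nonneg_of_le_pi (abs_nonneg θ) (by linarith [Real.pi_pos])
    have h1 := key_tendsto d μ ν lam (Real.sin |θ|) (Real.cos |θ|) hd hμ hν hlam hsin
      (Real.sin_le_one _) hcos (Real.cos_le_one _)
    have h2 : cK / Real.cos θ = 2 * Real.sqrt (d * lam) / Real.cos |θ| := by
      rw [hcKdef, Real.cos_abs]
    rw [h2]
    exact h1
  · have heq : (fun D => wtheta d D μ ν lam (π / 2)) = fun D => wstar d D μ ν lam 1 0 := by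
      funext D
      unfold wtheta
      rw [abs_of_pos Real.pi_div_two_pos, Real.sin_pi_div_two, Real.cos_pi_div_two]
    rw [heq]
    exact key_tendsto_pi2 d μ ν lam hd hμ hν hlam
  · have heq : (fun D => wtheta d D μ ν lam (-(π / 2))) = fun D => wstar d D μ ν lam 1 0 := by
      funext D
      unfold wtheta
      rw [abs_neg, abs_of_pos Real.pi_div_two_pos, Real.sin_pi_div_two, Real.cos_pi_div_two]
    rw [heq]
    exact key_tendsto_pi2 d μ ν lam hd hμ hν hlam
end
end

section
/- Assume D > 2d. For every θ ∈ [θ₀, π/2] and every θ̃ ∈ [0, π/2], one has w_*(θ̃) ≤ (cos(θ − φ_*(θ)) / cos(θ̃ − φ_*(θ))) · w_*(θ), where φ_*(θ) = arctan(α_*(θ)/β_*(θ)). -/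
open Real Set

noncomputable section

lemma lin_polar (a b : ℝ) (hb : 0 < b) (x : ℝ) :
    Real.sin x * a + Real.cos x * b =
      (b * Real.sqrt (1 + (a / b) ^ 2)) * Real.cos (x - Real.arctan (a / b)) := by
  rw [Real.cos_sub, Real.cos_arctan, Real.sin_arctan]
  have h : Real.sqrt (1 + (a / b) ^ 2) ≠ 0 := by positivity
  field_simp
  ring

theorem statement7
    (d D μ ν lam : ℝ) (hd : 0 < d) (hD : 2 * d < D) (hμ : 0 < μ) (hν : 0 < ν)
    (hlam : 0 < lam)
    (s₀ : ℝ) (hs₀ : s₀ ∈ Ioo (0:ℝ) 1)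
    (hs₀zero : PhiF d D μ ν (2 * Real.sqrt (d * lam)) s₀ = 0)
    (θ₀ : ℝ) (hθ₀ : θ₀ = Real.arccos s₀)
    (αs βs : ℝ → ℝ)
    (hsingle : ∀ θ ∈ Icc θ₀ (π/2),
      Sset d D μ ν (Real.sin θ) (Real.cos θ)
          (wstar d D μ ν lam (Real.sin θ) (Real.cos θ)) ∩
        Gset d lam (Real.sin θ) (Real.cos θ)
          (wstar d D μ ν lam (Real.sin θ) (Real.cos θ)) = {(βs θ, αs θ)} ∧
      0 < αs θ ∧ 0 < βs θ) :
    ∀ θ ∈ Icc θ₀ (π/2), ∀ θ' ∈ Icc (0:ℝ) (π/2),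
      wstar d D μ ν lam (Real.sin θ') (Real.cos θ') ≤
        (Real.cos (θ - Real.arctan (αs θ / βs θ)) /
          Real.cos (θ' - Real.arctan (αs θ / βs θ))) *
          wstar d D μ ν lam (Real.sin θ) (Real.cos θ) := by
  intro θ hθ θ' hθ'
  obtain ⟨hset, hα, hβ⟩ := hsingle θ hθ
  set w := wstar d D μ ν lam (Real.sin θ) (Real.cos θ) with hw
  have hmem : (βs θ, αs θ) ∈
      Sset d D μ ν (Real.sin θ) (Real.cos θ) w ∩
        Gset d lam (Real.sin θ) (Real.cos θ) w := by
    rw [hset]; exact rfl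
  obtain ⟨hS, hG⟩ := hmem
  obtain ⟨hSb, hSineq⟩ := hS
  have hGineq : lam ≤ w * Real.sin θ * αs θ + w * Real.cos θ * βs θ -
      d * ((αs θ) ^ 2 + (βs θ) ^ 2) := hG
  set φ := Real.arctan (αs θ / βs θ) with hφ
  have hφ0 : 0 < φ := by
    have := Real.arctan_strictMono (div_pos hα hβ)
    rw [Real.arctan_zero] at this; exact this
  have hφ1 : φ < π / 2 := Real.arctan_lt_pi_div_two _
  have hθ0pos : 0 < θ₀ := by rw [hθ₀]; exact Real.arccos_pos.mpr hs₀.2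
  have hθpos : 0 < θ := lt_of_lt_of_le hθ0pos hθ.1
  have hθle : θ ≤ π / 2 := hθ.2
  have hπ : 0 < π := Real.pi_pos
  have hsθ : 0 < Real.sin θ := Real.sin_pos_of_pos_of_lt_pi hθpos (by linarith)
  have hcθ : 0 ≤ Real.cos θ := Real.cos_nonneg_of_mem_Icc ⟨by linarith, hθle⟩
  have hsθ' : 0 ≤ Real.sin θ' :=
    Real.sin_nonneg_of_nonneg_of_le_pi hθ'.1 (by linarith [hθ'.2])
  have hcθ' : 0 ≤ Real.cos θ' := Real.cos_nonneg_of_mem_Icc ⟨by linarith [hθ'.1], hθ'.2⟩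
  have hc1 : 0 < Real.cos (θ - φ) :=
    Real.cos_pos_of_mem_Ioo ⟨by linarith, by linarith⟩
  have hc2 : 0 < Real.cos (θ' - φ) :=
    Real.cos_pos_of_mem_Ioo ⟨by linarith [hθ'.1, hθ'.2], by linarith [hθ'.1, hθ'.2]⟩
  have hwpos : 0 < w := by
    by_contra h
    push_neg at h
    nlinarith [mul_pos hsθ hα, mul_nonneg hcθ hβ.le, sq_nonneg (αs θ), sq_nonneg (βs θ),
      mul_pos hα hβ]
  set c' := Real.cos (θ - φ) / Real.cos (θ' - φ) * w with hc'
  have hc'pos : 0 < c' := mul_pos (div_pos hc1 hc2) hwpos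
  set R := βs θ * Real.sqrt (1 + (αs θ / βs θ) ^ 2) with hR
  have h1 := lin_polar (αs θ) (βs θ) hβ θ
  have h2 := lin_polar (αs θ) (βs θ) hβ θ'
  have hcc : c' * Real.cos (θ' - φ) = w * Real.cos (θ - φ) := by
    rw [hc']; field_simp
  have key : c' * Real.sin θ' * αs θ + c' * Real.cos θ' * βs θ =
      w * Real.sin θ * αs θ + w * Real.cos θ * βs θ := by
    linear_combination c' * h2 - w * h1 + R * hcc
  have hmem' : c' ∈ {c : ℝ | 0 < c ∧
      (Sset d D μ ν (Real.sin θ') (Real.cos θ') c ∩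
        Gset d lam (Real.sin θ') (Real.cos θ') c).Nonempty} := by
    refine ⟨hc'pos, ⟨(βs θ, αs θ), ⟨hSb, ?_⟩, ?_⟩⟩
    · show 0 ≤ c' * Real.sin θ' * αs θ + c' * Real.cos θ' * βs θ -
        D * (αs θ) ^ 2 + chiF μ ν (d * βs θ)
      rw [key]; exact hSineq
    · show lam ≤ c' * Real.sin θ' * αs θ + c' * Real.cos θ' * βs θ -
        d * ((αs θ) ^ 2 + (βs θ) ^ 2)
      rw [key]; exact hGineq
  calc wstar d D μ ν lam (Real.sin θ') (Real.cos θ') ≤ c' :=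
        csInf_le ⟨0, fun c hc => hc.1.le⟩ hmem'
    _ = _ := hc'
end
end

section
/- There exists w_* ≥ c_K (depending on ξ) such that for every c > 0 one has S(c) ∩ G(c) ≠ ∅ if and only if c ≥ w_*; moreover, S(w_*) ∩ G(w_*) consists of exactly one point. -/
open Real Set

noncomputable section

open Filter Topology

lemma convex_comb_pos (x y t : ℝ) (hx : 0 < x) (hy : 0 < y) (ht0 : 0 ≤ t) (ht1 : t ≤ 1) :
    0 < (1 - t) * x + t * y := by
  rcases eq_or_lt_of_le ht1 with h | h
  · subst h; nlinarith
  · nlinarith [mul_nonneg ht0 hy.le, mul_pos (by linarith : (0:ℝ) < 1 - t) hx]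

lemma aux_inv_convex (x y t : ℝ) (hx : 0 < x) (hy : 0 < y) (ht0 : 0 ≤ t) (ht1 : t ≤ 1) :
    1 / ((1 - t) * x + t * y) ≤ (1 - t) / x + t / y := by
  have hz : 0 < (1 - t) * x + t * y := convex_comb_pos x y t hx hy ht0 ht1
  rw [div_add_div _ _ (ne_of_gt hx) (ne_of_gt hy), div_le_div_iff₀ hz (by positivity)]
  nlinarith [mul_nonneg (mul_nonneg ht0 (sub_nonneg.2 ht1)) (sq_nonneg (x - y))]

lemma chiF_eq (μ ν s : ℝ) (h : ν + s ≠ 0) : chiF μ ν s = μ - μ * ν / (ν + s) := by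
  rw [chiF, eq_sub_iff_add_eq, ← add_div, div_eq_iff h]
  ring

lemma chiF_concave (μ ν s₁ s₂ t : ℝ) (hμ : 0 < μ) (hν : 0 < ν)
    (h1 : 0 < ν + s₁) (h2 : 0 < ν + s₂) (ht0 : 0 ≤ t) (ht1 : t ≤ 1) :
    (1 - t) * chiF μ ν s₁ + t * chiF μ ν s₂ ≤ chiF μ ν ((1 - t) * s₁ + t * s₂) := by
  have hz : 0 < ν + ((1 - t) * s₁ + t * s₂) := by
    have := convex_comb_pos (ν + s₁) (ν + s₂) t h1 h2 ht0 ht1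
    nlinarith
  rw [chiF_eq _ _ _ h1.ne', chiF_eq _ _ _ h2.ne', chiF_eq _ _ _ hz.ne']
  have key := aux_inv_convex (ν + s₁) (ν + s₂) t h1 h2 ht0 ht1
  have hrw : ν + ((1 - t) * s₁ + t * s₂) = (1 - t) * (ν + s₁) + t * (ν + s₂) := by ring
  rw [hrw]
  have key2 := mul_le_mul_of_nonneg_left key (by positivity : (0:ℝ) ≤ μ * ν)
  have e1 : μ * ν * (1 / ((1 - t) * (ν + s₁) + t * (ν + s₂))) = μ * ν / ((1 - t) * (ν + s₁) + t * (ν + s₂)) := by ring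
  have e2 : μ * ν * ((1 - t) / (ν + s₁) + t / (ν + s₂)) = (1 - t) * (μ * ν / (ν + s₁)) + t * (μ * ν / (ν + s₂)) := by ring
  rw [e1, e2] at key2
  linarith

lemma Sfun_concave (d D μ ν c ξ1 ξ2 t b1 a1 b2 a2 : ℝ)
    (hD : 0 ≤ D) (hμ : 0 < μ) (hν : 0 < ν)
    (hp : 0 < ν + d * b1) (hq : 0 < ν + d * b2) (ht0 : 0 ≤ t) (ht1 : t ≤ 1) :
    (1 - t) * (c * ξ1 * a1 + c * ξ2 * b1 - D * a1 ^ 2 + chiF μ ν (d * b1))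
      + t * (c * ξ1 * a2 + c * ξ2 * b2 - D * a2 ^ 2 + chiF μ ν (d * b2))
    ≤ c * ξ1 * ((1 - t) * a1 + t * a2) + c * ξ2 * ((1 - t) * b1 + t * b2)
      - D * ((1 - t) * a1 + t * a2) ^ 2 + chiF μ ν (d * ((1 - t) * b1 + t * b2)) := by
  have hχ := chiF_concave μ ν (d * b1) (d * b2) t hμ hν hp hq ht0 ht1
  have hrw : d * ((1 - t) * b1 + t * b2) = (1 - t) * (d * b1) + t * (d * b2) := by ring
  rw [hrw]
  nlinarith [mul_nonneg hD (mul_nonneg (mul_nonneg ht0 (sub_nonneg.2 ht1)) (sq_nonneg (a1 - a2)))]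


lemma nu_dx_pos (d ν x : ℝ) (hd : 0 < d) (hx : -(ν / d) < x) : 0 < ν + d * x := by
  rw [show -(ν / d) = -ν / d from (neg_div d ν).symm, div_lt_iff₀ hd] at hx
  nlinarith

set_option maxHeartbeats 2000000 in
lemma exists_smaller (d D μ ν lam w ξ1 ξ2 : ℝ)
    (hd : 0 < d) (hD : 0 < D) (hμ : 0 < μ) (hν : 0 < ν) (hlam : 0 < lam)
    (hξ1 : 0 ≤ ξ1) (hξ2 : 0 ≤ ξ2) (hw0 : 0 < w)
    (p : ℝ × ℝ) (hpβ : -(ν / d) < p.1)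
    (hpSval : 0 ≤ w * ξ1 * p.2 + w * ξ2 * p.1 - D * p.2 ^ 2 + chiF μ ν (d * p.1))
    (hgt : lam < w * ξ1 * p.2 + w * ξ2 * p.1 - d * (p.2 ^ 2 + p.1 ^ 2)) :
    ∃ c, 0 < c ∧ c < w ∧ (Sset d D μ ν ξ1 ξ2 c ∩ Gset d lam ξ1 ξ2 c).Nonempty := by
  have hνd : 0 < ν / d := by positivity
  have hνp : 0 < ν + d * p.1 := nu_dx_pos d ν p.1 hd hpβ
  have hν1 : 0 < ν + d * (1:ℝ) := by nlinarith
  have hS0 : 0 < w * ξ1 * (0:ℝ) + w * ξ2 * (1:ℝ) - D * (0:ℝ) ^ 2 + chiF μ ν (d * 1) := by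
    have hχd : 0 < chiF μ ν (d * 1) := by
      rw [chiF]; positivity
    nlinarith [mul_nonneg hw0.le hξ2]
  have hgc : ContinuousAt (fun t : ℝ => w * ξ1 * ((1 - t) * p.2 + t * 0)
      + w * ξ2 * ((1 - t) * p.1 + t * 1)
      - d * (((1 - t) * p.2 + t * 0) ^ 2 + ((1 - t) * p.1 + t * 1) ^ 2)) 0 := by
    fun_prop
  have hg0 : lam < (fun t : ℝ => w * ξ1 * ((1 - t) * p.2 + t * 0)
      + w * ξ2 * ((1 - t) * p.1 + t * 1)
      - d * (((1 - t) * p.2 + t * 0) ^ 2 + ((1 - t) * p.1 + t * 1) ^ 2)) 0 := by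
    simp only []
    nlinarith
  have hev : ∀ᶠ t in nhdsWithin (0:ℝ) (Set.Ioi 0), (lam < w * ξ1 * ((1 - t) * p.2 + t * 0)
      + w * ξ2 * ((1 - t) * p.1 + t * 1)
      - d * (((1 - t) * p.2 + t * 0) ^ 2 + ((1 - t) * p.1 + t * 1) ^ 2)) ∧ t ∈ Set.Ioc (0:ℝ) 1 := by
    have h1 := hgc.eventually (eventually_gt_nhds hg0)
    exact (h1.filter_mono nhdsWithin_le_nhds).and
      (Ioc_mem_nhdsGT_of_mem ⟨le_refl 0, one_pos⟩)
  obtain ⟨t, hGt, ht01⟩ := hev.exists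
  obtain ⟨ht0, ht1⟩ := ht01
  have hcon := Sfun_concave d D μ ν w ξ1 ξ2 t p.1 p.2 1 0 hD.le hμ hν hνp hν1 ht0.le ht1
  have hSt : 0 < w * ξ1 * ((1 - t) * p.2 + t * 0) + w * ξ2 * ((1 - t) * p.1 + t * 1)
      - D * ((1 - t) * p.2 + t * 0) ^ 2 + chiF μ ν (d * ((1 - t) * p.1 + t * 1)) := by
    linarith [hcon, mul_nonneg (sub_nonneg.2 ht1) hpSval, mul_pos ht0 hS0]
  set bt := (1 - t) * p.1 + t * 1 with hbt
  set at' := (1 - t) * p.2 + t * 0 with hat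
  have hνbt : 0 < ν + d * bt := by
    rw [hbt]
    have := convex_comb_pos (ν + d * p.1) (ν + d * 1) t hνp hν1 ht0.le ht1
    nlinarith
  have hu : 0 < ξ1 * at' + ξ2 * bt := by
    have hsq2 : (0:ℝ) ≤ at' ^ 2 + bt ^ 2 := by positivity
    nlinarith [mul_nonneg hd.le hsq2]
  set δG := (w * ξ1 * at' + w * ξ2 * bt - d * (at' ^ 2 + bt ^ 2)) - lam with hδG
  set δS := w * ξ1 * at' + w * ξ2 * bt - D * at' ^ 2 + chiF μ ν (d * bt) with hδS
  have hδGpos : 0 < δG := by rw [hδG]; linarith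
  have hδSpos : 0 < δS := by rw [hδS]; linarith [hSt]
  set ε := min (w / 2) (min (δG / (ξ1 * at' + ξ2 * bt)) (δS / (ξ1 * at' + ξ2 * bt))) with hε
  have hεpos : 0 < ε :=
    lt_min (by linarith) (lt_min (div_pos hδGpos hu) (div_pos hδSpos hu))
  have hεw : ε ≤ w / 2 := min_le_left _ _
  have hεu1 : ε * (ξ1 * at' + ξ2 * bt) ≤ δG :=
    (le_div_iff₀ hu).1 (le_trans (min_le_right _ _) (min_le_left _ _))
  have hεu2 : ε * (ξ1 * at' + ξ2 * bt) ≤ δS :=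
    (le_div_iff₀ hu).1 (le_trans (min_le_right _ _) (min_le_right _ _))
  refine ⟨w - ε, by linarith, by linarith, ⟨(bt, at'), ⟨?_, ?_⟩, ?_⟩⟩
  · show -(ν / d) < bt
    rw [hbt]
    nlinarith [mul_nonneg (sub_nonneg.2 ht1) (by linarith : (0:ℝ) ≤ p.1 + ν / d),
      mul_pos ht0 (by linarith : (0:ℝ) < 1 + ν / d)]
  · show 0 ≤ (w - ε) * ξ1 * at' + (w - ε) * ξ2 * bt - D * at' ^ 2 + chiF μ ν (d * bt)
    nlinarith [hεu2, hδSpos, hδS]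
  · show lam ≤ (w - ε) * ξ1 * at' + (w - ε) * ξ2 * bt - d * (at' ^ 2 + bt ^ 2)
    nlinarith [hεu1, hδGpos, hδG]

set_option maxHeartbeats 2000000 in
lemma midpoint_strict (d D μ ν lam w ξ1 ξ2 : ℝ)
    (hd : 0 < d) (hD : 0 < D) (hμ : 0 < μ) (hν : 0 < ν)
    (p q : ℝ × ℝ) (hne : p ≠ q)
    (hpβ : -(ν / d) < p.1) (hqβ : -(ν / d) < q.1)
    (hpS : 0 ≤ w * ξ1 * p.2 + w * ξ2 * p.1 - D * p.2 ^ 2 + chiF μ ν (d * p.1))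
    (hqS : 0 ≤ w * ξ1 * q.2 + w * ξ2 * q.1 - D * q.2 ^ 2 + chiF μ ν (d * q.1))
    (h1 : w * ξ1 * p.2 + w * ξ2 * p.1 - d * (p.2 ^ 2 + p.1 ^ 2) = lam)
    (h2 : w * ξ1 * q.2 + w * ξ2 * q.1 - d * (q.2 ^ 2 + q.1 ^ 2) = lam) :
    (((p.1 + q.1) / 2, (p.2 + q.2) / 2) ∈ Sset d D μ ν ξ1 ξ2 w ∩ Gset d lam ξ1 ξ2 w) ∧
    lam < w * ξ1 * ((p.2 + q.2) / 2) + w * ξ2 * ((p.1 + q.1) / 2)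
      - d * (((p.2 + q.2) / 2) ^ 2 + ((p.1 + q.1) / 2) ^ 2) := by
  have hνp : 0 < ν + d * p.1 := nu_dx_pos d ν p.1 hd hpβ
  have hνq : 0 < ν + d * q.1 := nu_dx_pos d ν q.1 hd hqβ
  have hdiff : 0 < (p.1 - q.1) ^ 2 + (p.2 - q.2) ^ 2 := by
    have hor : p.1 ≠ q.1 ∨ p.2 ≠ q.2 := by
      by_contra hcc
      push_neg at hcc
      exact hne (Prod.ext hcc.1 hcc.2)
    rcases hor with h | h
    · have := lt_of_le_of_ne (sq_nonneg (p.1 - q.1)) (Ne.symm (pow_ne_zero 2 (sub_ne_zero.mpr h)))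
      nlinarith [sq_nonneg (p.2 - q.2)]
    · have := lt_of_le_of_ne (sq_nonneg (p.2 - q.2)) (Ne.symm (pow_ne_zero 2 (sub_ne_zero.mpr h)))
      nlinarith [sq_nonneg (p.1 - q.1)]
  have hcon := Sfun_concave d D μ ν w ξ1 ξ2 (1/2) p.1 p.2 q.1 q.2 hD.le hμ hν hνp hνq
    (by norm_num) (by norm_num)
  have e1 : (1 - (1:ℝ)/2) * p.1 + (1/2 : ℝ) * q.1 = (p.1 + q.1) / 2 := by ring
  have e2 : (1 - (1:ℝ)/2) * p.2 + (1/2 : ℝ) * q.2 = (p.2 + q.2) / 2 := by ring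
  rw [e1, e2] at hcon
  have hmGval : lam < w * ξ1 * ((p.2 + q.2) / 2) + w * ξ2 * ((p.1 + q.1) / 2)
      - d * (((p.2 + q.2) / 2) ^ 2 + ((p.1 + q.1) / 2) ^ 2) := by
    nlinarith [mul_pos hd hdiff]
  refine ⟨⟨⟨?_, ?_⟩, ?_⟩, hmGval⟩
  · show -(ν / d) < (p.1 + q.1) / 2
    linarith
  · show 0 ≤ w * ξ1 * ((p.2 + q.2) / 2) + w * ξ2 * ((p.1 + q.1) / 2)
      - D * ((p.2 + q.2) / 2) ^ 2 + chiF μ ν (d * ((p.1 + q.1) / 2))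
    linarith
  · show lam ≤ w * ξ1 * ((p.2 + q.2) / 2) + w * ξ2 * ((p.1 + q.1) / 2)
      - d * (((p.2 + q.2) / 2) ^ 2 + ((p.1 + q.1) / 2) ^ 2)
    exact hmGval.le

set_option maxHeartbeats 4000000 in
theorem statement14
    (d D μ ν lam : ℝ) (hd : 0 < d) (hD : 0 < D) (hμ : 0 < μ) (hν : 0 < ν)
    (hlam : 0 < lam)
    (ξ1 ξ2 : ℝ) (hξ1 : 0 ≤ ξ1) (hξ2 : 0 ≤ ξ2) (hunit : ξ1 ^ 2 + ξ2 ^ 2 = 1) :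
    ∃ w : ℝ, 2 * Real.sqrt (d * lam) ≤ w ∧
      (∀ c : ℝ, 0 < c →
        ((Sset d D μ ν ξ1 ξ2 c ∩ Gset d lam ξ1 ξ2 c).Nonempty ↔ w ≤ c)) ∧
      (∃! p : ℝ × ℝ, p ∈ Sset d D μ ν ξ1 ξ2 w ∩ Gset d lam ξ1 ξ2 w) := by
  classical
  set A : Set ℝ :=
    {c : ℝ | 0 < c ∧ (Sset d D μ ν ξ1 ξ2 c ∩ Gset d lam ξ1 ξ2 c).Nonempty} with hA
  have hνd : 0 < ν / d := by positivity
  have hmemS : ∀ c (p : ℝ × ℝ), p ∈ Sset d D μ ν ξ1 ξ2 c ↔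
      (-(ν / d) < p.1 ∧ 0 ≤ c * ξ1 * p.2 + c * ξ2 * p.1 - D * p.2 ^ 2 + chiF μ ν (d * p.1)) :=
    fun _ _ => Iff.rfl
  have hmemG : ∀ c (p : ℝ × ℝ), p ∈ Gset d lam ξ1 ξ2 c ↔
      lam ≤ c * ξ1 * p.2 + c * ξ2 * p.1 - d * (p.2 ^ 2 + p.1 ^ 2) := fun _ _ => Iff.rfl
  have hmemA : ∀ c : ℝ, c ∈ A ↔
      (0 < c ∧ (Sset d D μ ν ξ1 ξ2 c ∩ Gset d lam ξ1 ξ2 c).Nonempty) := fun _ => Iff.rfl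
  -- positivity of ν + d x for x > -(ν/d)
  have hpos : ∀ x : ℝ, -(ν / d) < x → 0 < ν + d * x := by
    intro x hx
    rw [show -(ν / d) = -ν / d from (neg_div d ν).symm, div_lt_iff₀ hd] at hx
    nlinarith
  -- monotonicity
  have hmono : ∀ c c' : ℝ, 0 < c → c ≤ c' → ∀ p : ℝ × ℝ,
      p ∈ Sset d D μ ν ξ1 ξ2 c ∩ Gset d lam ξ1 ξ2 c →
      p ∈ Sset d D μ ν ξ1 ξ2 c' ∩ Gset d lam ξ1 ξ2 c' := by
    rintro c c' hc hcc' p ⟨⟨hβ, hS⟩, hG⟩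
    rw [hmemG] at hG
    have hsq : (0:ℝ) ≤ p.2 ^ 2 + p.1 ^ 2 := by positivity
    have hu : 0 < ξ1 * p.2 + ξ2 * p.1 := by
      nlinarith [mul_nonneg hd.le hsq]
    have hle : c * (ξ1 * p.2 + ξ2 * p.1) ≤ c' * (ξ1 * p.2 + ξ2 * p.1) :=
      mul_le_mul_of_nonneg_right hcc' hu.le
    exact ⟨⟨hβ, by nlinarith⟩, by rw [hmemG]; nlinarith⟩
  -- A is nonempty
  have hc0A : lam + d + D ∈ A := by
    rw [hmemA]
    refine ⟨by linarith, ⟨(ξ2, ξ1), ⟨?_, ?_⟩, ?_⟩⟩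
    · show -(ν / d) < ξ2
      linarith
    · show (0:ℝ) ≤ (lam + d + D) * ξ1 * ξ1 + (lam + d + D) * ξ2 * ξ2 - D * ξ1 ^ 2
        + chiF μ ν (d * ξ2)
      have hchi : 0 ≤ chiF μ ν (d * ξ2) :=
        div_nonneg (mul_nonneg hμ.le (mul_nonneg hd.le hξ2)) (by positivity)
      nlinarith [mul_nonneg hD.le (sq_nonneg ξ2)]
    · show lam ≤ (lam + d + D) * ξ1 * ξ1 + (lam + d + D) * ξ2 * ξ2 - d * (ξ1 ^ 2 + ξ2 ^ 2)
      nlinarith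
  -- lower bound for A
  have hlbA : ∀ c ∈ A, 2 * Real.sqrt (d * lam) ≤ c := by
    rintro c ⟨hc, p, hpS, hpG⟩
    rw [hmemG] at hpG
    have hCau : (ξ1 * p.2 + ξ2 * p.1) ^ 2 ≤ p.2 ^ 2 + p.1 ^ 2 := by
      nlinarith [sq_nonneg (ξ1 * p.1 - ξ2 * p.2)]
    have hG' : lam + d * (p.2 ^ 2 + p.1 ^ 2) ≤ c * (ξ1 * p.2 + ξ2 * p.1) := by nlinarith
    have h4 : 4 * (d * lam) ≤ c ^ 2 := by
      nlinarith [sq_nonneg (c - 2 * d * (ξ1 * p.2 + ξ2 * p.1)),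
        mul_le_mul_of_nonneg_left hG' (by positivity : (0:ℝ) ≤ 4 * d),
        mul_nonneg (by positivity : (0:ℝ) ≤ 4 * d ^ 2) (sub_nonneg.2 hCau)]
    have hs : Real.sqrt (d * lam) ≤ c / 2 := by
      rw [show c / 2 = Real.sqrt ((c / 2) ^ 2) from (Real.sqrt_sq (by linarith)).symm]
      exact Real.sqrt_le_sqrt (by nlinarith)
    linarith
  have hAne : A.Nonempty := ⟨lam + d + D, hc0A⟩
  have hbdd : BddBelow A := ⟨2 * Real.sqrt (d * lam), fun c hc => hlbA c hc⟩
  set w := sInf A with hw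
  have hwlb : 2 * Real.sqrt (d * lam) ≤ w := le_csInf hAne hlbA
  have hw0 : 0 < w := lt_of_lt_of_le (by positivity) hwlb
  have hray : ∀ c ∈ A, ∀ c', c ≤ c' → c' ∈ A := by
    rintro c ⟨hc, p, hp⟩ c' hcc'
    exact ⟨lt_of_lt_of_le hc hcc', ⟨p, hmono c c' hc hcc' p hp⟩⟩
  have hAgt : ∀ c, w < c → c ∈ A := by
    intro c hwc
    obtain ⟨a, haA, hac⟩ := exists_lt_of_csInf_lt hAne hwc
    exact hray a haA c hac.le
  -- compactness: w ∈ A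
  set cseq : ℕ → ℝ := fun n => w + 1 / (n + 1) with hcseq
  have hcseqA : ∀ n, cseq n ∈ A := by
    intro n
    apply hAgt
    have : 0 < 1 / ((n:ℝ) + 1) := by positivity
    simp only [hcseq]; linarith
  have hcs_le : ∀ n, cseq n ≤ w + 1 := by
    intro n
    have h1 : 1 / ((n:ℝ) + 1) ≤ 1 := by
      rw [div_le_one (by positivity)]
      linarith [Nat.cast_nonneg (α := ℝ) n]
    simp only [hcseq]; linarith
  have hcspos : ∀ n, 0 < cseq n := fun n => (hcseqA n).1
  choose pp hpp using fun n => (hcseqA n).2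
  set R := (w + 1) / d with hR
  set M := (w + 1) ^ 2 / d with hM
  have hRpos : 0 < R := div_pos (by linarith) hd
  have hMpos : 0 < M := div_pos (by nlinarith) hd
  set β₀ := -(M * ν) / (d * (μ + M)) with hβ₀def
  have hβ₀neg : β₀ ≤ 0 := by
    have : 0 ≤ M * ν / (d * (μ + M)) := by positivity
    rw [hβ₀def, neg_div]; linarith
  have hβ₀ : -(ν / d) < β₀ := by
    rw [hβ₀def, neg_div, neg_lt_neg_iff, div_lt_div_iff₀ (by positivity) hd]
    nlinarith [mul_pos (mul_pos hμ hν) hd]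
  have hRd : d * R = w + 1 := by
    rw [hR]; field_simp
  have hMR : (w + 1) * R = M := by
    rw [hR, hM]; field_simp
  have hbnd : ∀ n, pp n ∈ Set.Icc β₀ R ×ˢ Set.Icc (-R) R := by
    intro n
    have hSm := (hpp n).1
    have hGm := (hpp n).2
    rw [hmemS] at hSm
    rw [hmemG] at hGm
    obtain ⟨hb, hS⟩ := hSm
    have hc1 : 0 < cseq n := hcspos n
    have hcle : cseq n ≤ w + 1 := hcs_le n
    have hCau : (ξ1 * (pp n).2 + ξ2 * (pp n).1) ^ 2 ≤ (pp n).2 ^ 2 + (pp n).1 ^ 2 := by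
      nlinarith [sq_nonneg (ξ1 * (pp n).1 - ξ2 * (pp n).2)]
    have hG' : lam + d * ((pp n).2 ^ 2 + (pp n).1 ^ 2)
        ≤ cseq n * (ξ1 * (pp n).2 + ξ2 * (pp n).1) := by nlinarith
    have hsq : (0:ℝ) ≤ (pp n).2 ^ 2 + (pp n).1 ^ 2 := by positivity
    have hu0 : 0 < ξ1 * (pp n).2 + ξ2 * (pp n).1 := by
      nlinarith [mul_nonneg hd.le hsq]
    have hdu : d * (ξ1 * (pp n).2 + ξ2 * (pp n).1) ≤ cseq n := by
      nlinarith [mul_nonneg hd.le (sub_nonneg.2 hCau)]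
    have huR : ξ1 * (pp n).2 + ξ2 * (pp n).1 ≤ R := by
      rw [hR, le_div_iff₀ hd]
      nlinarith
    have hcuM : cseq n * (ξ1 * (pp n).2 + ξ2 * (pp n).1) ≤ M := by
      calc cseq n * (ξ1 * (pp n).2 + ξ2 * (pp n).1)
          ≤ (w + 1) * R := mul_le_mul hcle huR hu0.le (by linarith)
        _ = M := hMR
    have hr2 : (pp n).2 ^ 2 + (pp n).1 ^ 2 ≤ R ^ 2 := by
      nlinarith [hG', hcuM, hMR, hRd]
    have hνβ : 0 < ν + d * (pp n).1 := hpos _ hb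
    have hchiM : -M ≤ chiF μ ν (d * (pp n).1) := by
      nlinarith [mul_nonneg hD.le (sq_nonneg (pp n).2)]
    have hββ₀ : β₀ ≤ (pp n).1 := by
      rcases le_or_gt 0 (pp n).1 with h | h
      · linarith
      · have hdiv : -M * (ν + d * (pp n).1) ≤ μ * (d * (pp n).1) := by
          have := (le_div_iff₀ hνβ).1 hchiM
          simpa [chiF] using (le_div_iff₀ hνβ).1 hchiM
        rw [hβ₀def, div_le_iff₀ (by positivity)]
        nlinarith
    refine Set.mem_prod.2 ⟨Set.mem_Icc.2 ⟨hββ₀, ?_⟩, Set.mem_Icc.2 ⟨?_, ?_⟩⟩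
    · nlinarith [sq_nonneg ((pp n).2), sq_nonneg ((pp n).1 - R), sq_nonneg ((pp n).1 + R)]
    · nlinarith [sq_nonneg ((pp n).1), sq_nonneg ((pp n).2 - R), sq_nonneg ((pp n).2 + R)]
    · nlinarith [sq_nonneg ((pp n).1), sq_nonneg ((pp n).2 - R), sq_nonneg ((pp n).2 + R)]
  have hKcomp : IsCompact (Set.Icc β₀ R ×ˢ Set.Icc (-R) R) := isCompact_Icc.prod isCompact_Icc
  obtain ⟨q, hqK, φ, hφ, hconv⟩ := hKcomp.tendsto_subseq hbnd
  have hq1 : β₀ ≤ q.1 := (Set.mem_prod.1 hqK).1.1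
  have hνq : 0 < ν + d * q.1 := hpos _ (lt_of_lt_of_le hβ₀ hq1)
  have htc : Tendsto (fun k => cseq (φ k)) atTop (𝓝 w) := by
    have h0 : Tendsto cseq atTop (𝓝 (w + 0)) :=
      tendsto_const_nhds.add tendsto_one_div_add_atTop_nhds_zero_nat
    rw [add_zero] at h0
    exact h0.comp hφ.tendsto_atTop
  have ht1 : Tendsto (fun k => (pp (φ k)).1) atTop (𝓝 q.1) :=
    (continuous_fst.tendsto q).comp hconv
  have ht2 : Tendsto (fun k => (pp (φ k)).2) atTop (𝓝 q.2) :=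
    (continuous_snd.tendsto q).comp hconv
  have htchi : Tendsto (fun k => chiF μ ν (d * (pp (φ k)).1)) atTop (𝓝 (chiF μ ν (d * q.1))) := by
    simp only [chiF]
    exact Tendsto.div ((ht1.const_mul d).const_mul μ) ((ht1.const_mul d).const_add ν) hνq.ne'
  have htS : Tendsto (fun k => cseq (φ k) * ξ1 * (pp (φ k)).2 + cseq (φ k) * ξ2 * (pp (φ k)).1
      - D * (pp (φ k)).2 ^ 2 + chiF μ ν (d * (pp (φ k)).1)) atTop
      (𝓝 (w * ξ1 * q.2 + w * ξ2 * q.1 - D * q.2 ^ 2 + chiF μ ν (d * q.1))) :=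
    ((((htc.mul_const ξ1).mul ht2).add ((htc.mul_const ξ2).mul ht1)).sub
      ((ht2.pow 2).const_mul D)).add htchi
  have htG : Tendsto (fun k => cseq (φ k) * ξ1 * (pp (φ k)).2 + cseq (φ k) * ξ2 * (pp (φ k)).1
      - d * ((pp (φ k)).2 ^ 2 + (pp (φ k)).1 ^ 2)) atTop
      (𝓝 (w * ξ1 * q.2 + w * ξ2 * q.1 - d * (q.2 ^ 2 + q.1 ^ 2))) :=
    (((htc.mul_const ξ1).mul ht2).add ((htc.mul_const ξ2).mul ht1)).sub
      (((ht2.pow 2).add (ht1.pow 2)).const_mul d)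
  have hqS : q ∈ Sset d D μ ν ξ1 ξ2 w := by
    rw [hmemS]
    refine ⟨lt_of_lt_of_le hβ₀ hq1, ge_of_tendsto' htS fun k => ?_⟩
    exact ((hmemS _ _).1 (hpp (φ k)).1).2
  have hqG : q ∈ Gset d lam ξ1 ξ2 w := by
    rw [hmemG]
    exact ge_of_tendsto' htG fun k => (hmemG _ _).1 (hpp (φ k)).2
  have hwA : w ∈ A := ⟨hw0, q, hqS, hqG⟩
  -- Step A: every point of the intersection at w lies on the circle
  have hcirc : ∀ p : ℝ × ℝ, p ∈ Sset d D μ ν ξ1 ξ2 w ∩ Gset d lam ξ1 ξ2 w →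
      w * ξ1 * p.2 + w * ξ2 * p.1 - d * (p.2 ^ 2 + p.1 ^ 2) = lam := by
    rintro p ⟨hpS, hpG⟩
    rw [hmemS] at hpS
    rw [hmemG] at hpG
    obtain ⟨hpβ, hpSval⟩ := hpS
    by_contra hnep
    have hgt : lam < w * ξ1 * p.2 + w * ξ2 * p.1 - d * (p.2 ^ 2 + p.1 ^ 2) :=
      lt_of_le_of_ne hpG (Ne.symm hnep)
    obtain ⟨c, hc0, hcw, hcne⟩ := exists_smaller d D μ ν lam w ξ1 ξ2
      hd hD hμ hν hlam hξ1 hξ2 hw0 p hpβ hpSval hgt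
    have : w ≤ c := csInf_le hbdd ⟨hc0, hcne⟩
    linarith
  -- unique point
  refine ⟨w, hwlb, ?_, ?_⟩
  · intro c hc
    constructor
    · intro hne
      exact csInf_le hbdd ⟨hc, hne⟩
    · intro hwc
      exact (hray w hwA c hwc).2
  · refine ⟨q, ⟨hqS, hqG⟩, ?_⟩
    intro p hp
    by_contra hne
    have h1 := hcirc p hp
    have h2 := hcirc q ⟨hqS, hqG⟩
    obtain ⟨hpS', hpG'⟩ := hp
    rw [hmemS] at hpS' hqS
    obtain ⟨hmmem, hmval⟩ := midpoint_strict d D μ ν lam w ξ1 ξ2 hd hD hμ hν p q hne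
      hpS'.1 hqS.1 hpS'.2 hqS.2 h1 h2
    have := hcirc _ hmmem
    linarith
end
end

section
/- One has w_*(ξ) = c_K if and only if c_K²/(2d) − D c_K² ξ₁²/(4d²) ≥ −μ c_K ξ₂/(2ν + c_K ξ₂), which is equivalent to Φ(ξ₂) ≥ 0; consequently w_*(ξ) = c_K if and only if either D ≤ 2d, or D > 2d and ξ₂ ≥ s₀, where s₀ is the unique zero of Φ in (0,1). -/
open Real Set

noncomputable section

/-- If G(c) is nonempty then c ≥ c_K. -/
lemma aux_lower (d lam ξ1 ξ2 c cK : ℝ) (hd : 0 < d) (hc : 0 < c)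
    (hcKpos : 0 < cK) (hcK2 : cK ^ 2 = 4 * (d * lam))
    (hunit : ξ1 ^ 2 + ξ2 ^ 2 = 1)
    (h : (Gset d lam ξ1 ξ2 c).Nonempty) : cK ≤ c := by
  obtain ⟨⟨β, α⟩, hG⟩ := h
  simp only [Gset, Set.mem_setOf_eq] at hG
  have h2 : cK ^ 2 ≤ c ^ 2 := by
    nlinarith [sq_nonneg (c * ξ1 - 2 * d * α), sq_nonneg (c * ξ2 - 2 * d * β), hd.le]
  nlinarith [h2, hcKpos, hc]

/-- Monotonicity of Φ on [0, ∞). -/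
lemma phi_mono (d D μ ν cK : ℝ) (hd : 0 < d) (hD : 0 < D) (hμ : 0 < μ) (hν : 0 < ν)
    (hcK : 0 < cK) {a b : ℝ} (ha : 0 ≤ a) (hab : a < b) :
    PhiF d D μ ν cK a < PhiF d D μ ν cK b := by
  have hTa : 0 < 2 * ν * cK + cK ^ 2 * a := by nlinarith [sq_nonneg cK]
  have hTb : 0 < 2 * ν * cK + cK ^ 2 * b := by nlinarith [sq_nonneg cK]
  have key : PhiF d D μ ν cK b - PhiF d D μ ν cK a
      = D * (b ^ 2 - a ^ 2)
        + 4 * d ^ 2 * μ * (2 * ν * cK) * (b - a)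
            / ((2 * ν * cK + cK ^ 2 * a) * (2 * ν * cK + cK ^ 2 * b)) := by
    unfold PhiF
    have h1 := hTa.ne'
    have h2 := hTb.ne'
    generalize hA : 2 * ν * cK + cK ^ 2 * a = A at h1 ⊢
    generalize hB : 2 * ν * cK + cK ^ 2 * b = B at h2 ⊢
    field_simp
    subst hA hB
    ring
  have hba : 0 < b - a := sub_pos.mpr hab
  have hfrac : 0 ≤ 4 * d ^ 2 * μ * (2 * ν * cK) * (b - a)
      / ((2 * ν * cK + cK ^ 2 * a) * (2 * ν * cK + cK ^ 2 * b)) := by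
    apply div_nonneg
    · nlinarith [mul_pos (mul_pos (show (0:ℝ) < 4 * d ^ 2 * μ by positivity)
        (show (0:ℝ) < 2 * ν * cK by positivity)) hba]
    · positivity
  have hsq : a ^ 2 < b ^ 2 := by nlinarith
  nlinarith [key, hfrac, hsq]

lemma aux_abs_lt (x y : ℝ) (h : x ^ 2 < y ^ 2) (hy : 0 ≤ y) : |x| < y := by
  nlinarith [sq_abs x, abs_nonneg x]

lemma sq_add_le_two (X e s T : ℝ) (hX : X ^ 2 ≤ T) (hs : s ^ 2 ≤ 1) :
    (X + e * s) ^ 2 ≤ 2 * T + 2 * e ^ 2 := by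
  nlinarith [sq_nonneg (X - e * s),
    mul_nonneg (sq_nonneg e) (by linarith : (0:ℝ) ≤ 1 - s ^ 2)]

/-- Quantitative estimate: any point of G(c) with c close to c_K is close to the
vertex point. -/
lemma aux_est (d lam cK c β α ξ1 ξ2 η δ : ℝ) (hd : 0 < d) (hδpos : 0 < δ)
    (hη : 0 < η) (hη1 : η ≤ δ) (hη2 : η ≤ 1) (hη3 : η * (2 * cK + 2) ≤ d ^ 2 * δ ^ 2)
    (hcKpos : 0 < cK) (hcK2 : cK ^ 2 = 4 * (d * lam)) (hunit : ξ1 ^ 2 + ξ2 ^ 2 = 1)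
    (hG : lam ≤ c * ξ1 * α + c * ξ2 * β - d * (α ^ 2 + β ^ 2))
    (he0 : cK ≤ c) (he1 : c < cK + η) :
    |c - cK| < δ ∧ |β - cK * ξ2 / (2 * d)| < δ ∧ |α - cK * ξ1 / (2 * d)| < δ := by
  have hxi1 : ξ1 ^ 2 ≤ 1 := by linarith [sq_nonneg ξ2]
  have hxi2 : ξ2 ^ 2 ≤ 1 := by linarith [sq_nonneg ξ1]
  have hxc : c ^ 2 * ξ1 ^ 2 + c ^ 2 * ξ2 ^ 2 = c ^ 2 := by
    linear_combination c ^ 2 * hunit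
  have hGd : 4 * d * lam ≤ 4 * d * (c * ξ1 * α + c * ξ2 * β - d * (α ^ 2 + β ^ 2)) :=
    mul_le_mul_of_nonneg_left hG (by linarith : (0:ℝ) ≤ 4 * d)
  have h4a : (2 * d * α - c * ξ1) ^ 2 ≤ c ^ 2 - cK ^ 2 := by
    linarith [hGd, hxc, hcK2, sq_nonneg (2 * d * β - c * ξ2)]
  have h4b : (2 * d * β - c * ξ2) ^ 2 ≤ c ^ 2 - cK ^ 2 := by
    linarith [hGd, hxc, hcK2, sq_nonneg (2 * d * α - c * ξ1)]
  have hcc : c ^ 2 - cK ^ 2 ≤ η * (2 * cK + 1) := by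
    linarith [mul_nonneg (by linarith : (0:ℝ) ≤ c - cK) (by linarith : (0:ℝ) ≤ η - (c - cK)),
      mul_nonneg (by linarith : (0:ℝ) ≤ η - (c - cK)) hcKpos.le,
      mul_nonneg hη.le (by linarith : (0:ℝ) ≤ 1 - (c - cK))]
  have hee : (c - cK) ^ 2 ≤ η := by
    linarith [mul_nonneg (by linarith : (0:ℝ) ≤ c - cK) (by linarith : (0:ℝ) ≤ η - (c - cK)),
      mul_nonneg hη.le (by linarith : (0:ℝ) ≤ 1 - (c - cK))]
  have hd2 : 0 < d ^ 2 * δ ^ 2 := mul_pos (by positivity) (pow_pos hδpos 2)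
  have hbound : 2 * (c ^ 2 - cK ^ 2) + 2 * (c - cK) ^ 2 < 4 * d ^ 2 * δ ^ 2 := by
    linarith [hcc, hee, hη3, hd2]
  have hA : (2 * d * α - cK * ξ1) ^ 2 < (2 * d * δ) ^ 2 := by
    have h := sq_add_le_two (2 * d * α - c * ξ1) (c - cK) ξ1 (c ^ 2 - cK ^ 2) h4a hxi1
    nlinarith [h, hbound]
  have hB : (2 * d * β - cK * ξ2) ^ 2 < (2 * d * δ) ^ 2 := by
    have h := sq_add_le_two (2 * d * β - c * ξ2) (c - cK) ξ2 (c ^ 2 - cK ^ 2) h4b hxi2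
    nlinarith [h, hbound]
  have h2d : (0:ℝ) < 2 * d := by linarith
  refine ⟨?_, ?_, ?_⟩
  · rw [abs_of_nonneg (by linarith : (0:ℝ) ≤ c - cK)]
    linarith
  · rw [show β - cK * ξ2 / (2 * d) = (2 * d * β - cK * ξ2) / (2 * d) by
      field_simp, abs_div, abs_of_pos h2d, div_lt_iff₀ h2d]
    have := aux_abs_lt (2 * d * β - cK * ξ2) (2 * d * δ) hB (by positivity)
    linarith [this]
  · rw [show α - cK * ξ1 / (2 * d) = (2 * d * α - cK * ξ1) / (2 * d) by
      field_simp, abs_div, abs_of_pos h2d, div_lt_iff₀ h2d]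
    have := aux_abs_lt (2 * d * α - cK * ξ1) (2 * d * δ) hA (by positivity)
    linarith [this]

/-- If the condition fails at c_K, then the minimal speed is not c_K. -/
lemma aux_hard (d D μ ν lam ξ1 ξ2 cK : ℝ) (hd : 0 < d) (hD : 0 < D) (hμ : 0 < μ)
    (hν : 0 < ν) (hlam : 0 < lam) (hξ1 : 0 ≤ ξ1) (hξ2 : 0 ≤ ξ2)
    (hunit : ξ1 ^ 2 + ξ2 ^ 2 = 1) (hcKpos : 0 < cK) (hcK2 : cK ^ 2 = 4 * (d * lam))
    (hnC : cK ^ 2 / (2 * d) - D * cK ^ 2 * ξ1 ^ 2 / (4 * d ^ 2)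
      < -(μ * cK * ξ2 / (2 * ν + cK * ξ2))) :
    wstar d D μ ν lam ξ1 ξ2 ≠ cK := by
  obtain ⟨δ, hδpos, hneg⟩ : ∃ δ : ℝ, 0 < δ ∧ ∀ c β α : ℝ,
      |c - cK| < δ → |β - cK * ξ2 / (2 * d)| < δ → |α - cK * ξ1 / (2 * d)| < δ →
      c * ξ1 * α + c * ξ2 * β - D * α ^ 2 + μ * (d * β) / (ν + d * β) < 0 := by
    set F : ℝ × ℝ × ℝ → ℝ := fun q =>
      q.1 * ξ1 * q.2.2 + q.1 * ξ2 * q.2.1 - D * q.2.2 ^ 2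
        + μ * (d * q.2.1) / (ν + d * q.2.1) with hF
    have hbs : (0:ℝ) ≤ cK * ξ2 / (2 * d) :=
      div_nonneg (mul_nonneg hcKpos.le hξ2) (by positivity)
    have hden : (0:ℝ) < ν + d * (cK * ξ2 / (2 * d)) := by
      nlinarith [mul_nonneg hd.le hbs]
    have hcont : ContinuousAt F (cK, cK * ξ2 / (2 * d), cK * ξ1 / (2 * d)) := by
      have hc1 : ContinuousAt (fun q : ℝ × ℝ × ℝ =>
          q.1 * ξ1 * q.2.2 + q.1 * ξ2 * q.2.1 - D * q.2.2 ^ 2)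
          (cK, cK * ξ2 / (2 * d), cK * ξ1 / (2 * d)) := by fun_prop
      have hc2 : ContinuousAt (fun q : ℝ × ℝ × ℝ => μ * (d * q.2.1) / (ν + d * q.2.1))
          (cK, cK * ξ2 / (2 * d), cK * ξ1 / (2 * d)) :=
        ContinuousAt.div (by fun_prop) (by fun_prop) (by exact hden.ne')
      exact hc1.add hc2
    have hFp : F (cK, cK * ξ2 / (2 * d), cK * ξ1 / (2 * d))
        = cK ^ 2 * (ξ1 ^ 2 + ξ2 ^ 2) / (2 * d) - D * cK ^ 2 * ξ1 ^ 2 / (4 * d ^ 2)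
          + μ * cK * ξ2 / (2 * ν + cK * ξ2) := by
      simp only [hF]
      have hden' : ν + d * (cK * ξ2 / (2 * d)) ≠ 0 := hden.ne'
      have ht' : 2 * ν + cK * ξ2 ≠ 0 := by nlinarith [mul_nonneg hcKpos.le hξ2]
      field_simp
      ring
    rw [hunit, mul_one] at hFp
    have hFneg : F (cK, cK * ξ2 / (2 * d), cK * ξ1 / (2 * d)) < 0 := by
      rw [hFp]; linarith
    obtain ⟨δ, hδpos, hball⟩ := Metric.continuousAt_iff.mp hcont
      (-(F (cK, cK * ξ2 / (2 * d), cK * ξ1 / (2 * d)))) (by linarith)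
    refine ⟨δ, hδpos, fun c β α h1 h2 h3 => ?_⟩
    have hq : dist ((c, β, α) : ℝ × ℝ × ℝ)
        (cK, cK * ξ2 / (2 * d), cK * ξ1 / (2 * d)) < δ := by
      rw [Prod.dist_eq, Prod.dist_eq]
      simp only [Real.dist_eq]
      exact max_lt h1 (max_lt h2 h3)
    have hb := hball hq
    rw [Real.dist_eq] at hb
    have h4 := (abs_lt.mp hb).2
    simp only [hF] at h4 ⊢
    linarith
  obtain ⟨η, hη, hη1, hη2, hη3⟩ : ∃ η : ℝ, 0 < η ∧ η ≤ δ ∧ η ≤ 1 ∧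
      η * (2 * cK + 2) ≤ d ^ 2 * δ ^ 2 := by
    refine ⟨min δ (min 1 (d ^ 2 * δ ^ 2 / (2 * cK + 2))), ?_, min_le_left _ _,
      le_trans (min_le_right _ _) (min_le_left _ _), ?_⟩
    · exact lt_min hδpos (lt_min one_pos
        (div_pos (mul_pos (by positivity) (pow_pos hδpos 2)) (by linarith)))
    · have h := le_trans (min_le_right δ (min 1 (d ^ 2 * δ ^ 2 / (2 * cK + 2))))
        (min_le_right 1 (d ^ 2 * δ ^ 2 / (2 * cK + 2)))
      exact (le_div_iff₀ (by linarith)).mp h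
  have hkey : ∀ c : ℝ, 0 < c →
      (Sset d D μ ν ξ1 ξ2 c ∩ Gset d lam ξ1 ξ2 c).Nonempty → cK + η ≤ c := by
    intro c hc hne
    by_contra hlt
    push_neg at hlt
    obtain ⟨⟨β, α⟩, hS, hG⟩ := hne
    simp only [Sset, Gset, Set.mem_setOf_eq, chiF] at hS hG
    have hcKle : cK ≤ c := aux_lower d lam ξ1 ξ2 c cK hd hc hcKpos hcK2 hunit
      ⟨⟨β, α⟩, hG⟩
    obtain ⟨e1, e2, e3⟩ := aux_est d lam cK c β α ξ1 ξ2 η δ hd hδpos hη hη1 hη2 hη3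
      hcKpos hcK2 hunit hG hcKle hlt
    have hlt0 := hneg c β α e1 e2 e3
    linarith [hS.2]
  intro heq
  unfold wstar at heq
  rcases eq_empty_or_nonempty {c : ℝ | 0 < c ∧
      (Sset d D μ ν ξ1 ξ2 c ∩ Gset d lam ξ1 ξ2 c).Nonempty} with hW | hW
  · rw [hW, Real.sInf_empty] at heq
    linarith [hcKpos]
  · have hle : cK + η ≤ sInf {c : ℝ | 0 < c ∧
        (Sset d D μ ν ξ1 ξ2 c ∩ Gset d lam ξ1 ξ2 c).Nonempty} :=
      le_csInf hW (fun c hc => hkey c hc.1 hc.2)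
    rw [heq] at hle
    linarith

theorem statement15
    (d D μ ν lam : ℝ) (hd : 0 < d) (hD : 0 < D) (hμ : 0 < μ) (hν : 0 < ν)
    (hlam : 0 < lam)
    (ξ1 ξ2 : ℝ) (hξ1 : 0 ≤ ξ1) (hξ2 : 0 ≤ ξ2) (hunit : ξ1 ^ 2 + ξ2 ^ 2 = 1) :
    (wstar d D μ ν lam ξ1 ξ2 = 2 * Real.sqrt (d * lam) ↔
      -(μ * (2 * Real.sqrt (d * lam)) * ξ2 / (2 * ν + 2 * Real.sqrt (d * lam) * ξ2)) ≤
        (2 * Real.sqrt (d * lam)) ^ 2 / (2 * d) -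
          D * (2 * Real.sqrt (d * lam)) ^ 2 * ξ1 ^ 2 / (4 * d ^ 2)) ∧
    (-(μ * (2 * Real.sqrt (d * lam)) * ξ2 / (2 * ν + 2 * Real.sqrt (d * lam) * ξ2)) ≤
        (2 * Real.sqrt (d * lam)) ^ 2 / (2 * d) -
          D * (2 * Real.sqrt (d * lam)) ^ 2 * ξ1 ^ 2 / (4 * d ^ 2) ↔
      0 ≤ PhiF d D μ ν (2 * Real.sqrt (d * lam)) ξ2) ∧
    (D ≤ 2 * d → wstar d D μ ν lam ξ1 ξ2 = 2 * Real.sqrt (d * lam)) ∧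
    (∀ s₀ : ℝ, 2 * d < D → s₀ ∈ Ioo (0:ℝ) 1 →
      PhiF d D μ ν (2 * Real.sqrt (d * lam)) s₀ = 0 →
      (wstar d D μ ν lam ξ1 ξ2 = 2 * Real.sqrt (d * lam) ↔ s₀ ≤ ξ2)) := by
  have hdl : 0 < d * lam := mul_pos hd hlam
  set cK : ℝ := 2 * Real.sqrt (d * lam) with hcKdef
  have hcKpos : 0 < cK := by
    have := Real.sqrt_pos.mpr hdl
    positivity
  have hcK2 : cK ^ 2 = 4 * (d * lam) := by
    rw [hcKdef, mul_pow, Real.sq_sqrt hdl.le]; ring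
  -- the condition C
  set C : Prop := -(μ * cK * ξ2 / (2 * ν + cK * ξ2)) ≤
      cK ^ 2 / (2 * d) - D * cK ^ 2 * ξ1 ^ 2 / (4 * d ^ 2) with hCdef
  have ht : 0 < 2 * ν + cK * ξ2 := by positivity
  -- bullet 2: C ↔ 0 ≤ Φ(ξ2)
  have bullet2 : C ↔ 0 ≤ PhiF d D μ ν cK ξ2 := by
    have h1 : ξ2 ^ 2 - 1 = -ξ1 ^ 2 := by linarith
    have key : PhiF d D μ ν cK ξ2 = (4 * d ^ 2 / cK ^ 2) *
        ((cK ^ 2 / (2 * d) - D * cK ^ 2 * ξ1 ^ 2 / (4 * d ^ 2))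
          - (-(μ * cK * ξ2 / (2 * ν + cK * ξ2)))) := by
      unfold PhiF
      rw [h1]
      have ht2 : (2 * ν * cK + cK ^ 2 * ξ2) ≠ 0 := by nlinarith [sq_nonneg cK]
      field_simp
      ring
    rw [hCdef, key]
    rw [mul_nonneg_iff_of_pos_left (by positivity : (0:ℝ) < 4 * d ^ 2 / cK ^ 2)]
    rw [sub_nonneg]
  -- membership: C → cK belongs to the defining set
  have hmem : C → cK ∈ {c : ℝ | 0 < c ∧
      (Sset d D μ ν ξ1 ξ2 c ∩ Gset d lam ξ1 ξ2 c).Nonempty} := by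
    intro hC
    refine ⟨hcKpos, ⟨(cK * ξ2 / (2 * d), cK * ξ1 / (2 * d)), ?_, ?_⟩⟩
    · constructor
      · have h1 : -(ν / d) < 0 := by
          have := div_pos hν hd
          linarith
        have h2 : (0:ℝ) ≤ cK * ξ2 / (2 * d) := by positivity
        linarith
      · have heq : cK * ξ1 * (cK * ξ1 / (2 * d)) + cK * ξ2 * (cK * ξ2 / (2 * d))
            - D * (cK * ξ1 / (2 * d)) ^ 2 + chiF μ ν (d * (cK * ξ2 / (2 * d)))
            = cK ^ 2 * (ξ1 ^ 2 + ξ2 ^ 2) / (2 * d) - D * cK ^ 2 * ξ1 ^ 2 / (4 * d ^ 2)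
              + μ * cK * ξ2 / (2 * ν + cK * ξ2) := by
          simp only [chiF]
          have hden : ν + d * (cK * ξ2 / (2 * d)) ≠ 0 := by
            have : (0:ℝ) < ν + d * (cK * ξ2 / (2 * d)) := by positivity
            linarith
          field_simp
          ring
        rw [hunit, mul_one] at heq
        rw [heq]
        rw [hCdef] at hC
        linarith
    · show lam ≤ _
      have heq : cK * ξ1 * (cK * ξ1 / (2 * d)) + cK * ξ2 * (cK * ξ2 / (2 * d))
          - d * ((cK * ξ1 / (2 * d)) ^ 2 + (cK * ξ2 / (2 * d)) ^ 2)
          = cK ^ 2 * (ξ1 ^ 2 + ξ2 ^ 2) / (4 * d) := by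
        field_simp
        ring
      rw [hunit, mul_one, hcK2] at heq
      rw [heq]
      have : 4 * (d * lam) / (4 * d) = lam := by field_simp
      rw [this]
  -- upper bound: C implies wstar = cK
  have hwstar_of : C → wstar d D μ ν lam ξ1 ξ2 = cK := by
    intro hC
    have hm := hmem hC
    unfold wstar
    apply le_antisymm
    · exact csInf_le ⟨0, fun x hx => hx.1.le⟩ hm
    · refine le_csInf ⟨cK, hm⟩ ?_
      rintro c ⟨hc, ⟨p, hpS, hpG⟩⟩
      exact aux_lower d lam ξ1 ξ2 c cK hd hc hcKpos hcK2 hunit ⟨p, hpG⟩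
  have hhard : ¬C → wstar d D μ ν lam ξ1 ξ2 ≠ cK := by
    intro hnC
    rw [hCdef] at hnC
    push_neg at hnC
    exact aux_hard d D μ ν lam ξ1 ξ2 cK hd hD hμ hν hlam hξ1 hξ2 hunit hcKpos hcK2 hnC
  have bullet1 : wstar d D μ ν lam ξ1 ξ2 = cK ↔ C := by
    constructor
    · intro h
      by_contra hnC
      exact hhard hnC h
    · exact hwstar_of
  refine ⟨bullet1, bullet2, ?_, ?_⟩
  · intro hD2
    apply hwstar_of
    rw [bullet2]
    unfold PhiF
    have hdenpos : (0:ℝ) ≤ 2 * ν * cK + cK ^ 2 * ξ2 := by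
      nlinarith [mul_nonneg (sq_nonneg cK) hξ2, mul_pos hν hcKpos]
    have hfr : (0:ℝ) ≤ 4 * d ^ 2 * μ * ξ2 / (2 * ν * cK + cK ^ 2 * ξ2) :=
      div_nonneg (by positivity) hdenpos
    nlinarith [hfr, mul_nonneg hD.le (sq_nonneg ξ2)]
  · intro s₀ hD2 hs₀ hPhi0
    rw [bullet1, bullet2]
    constructor
    · intro hPhi
      by_contra hlt
      push_neg at hlt
      have h := phi_mono d D μ ν cK hd hD hμ hν hcKpos hξ2 hlt
      rw [hPhi0] at h
      linarith
    · intro hs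
      rcases eq_or_lt_of_le hs with h | h
      · rw [← h]
        exact le_of_eq hPhi0.symm
      · have h2 := phi_mono d D μ ν cK hd hD hμ hν hcKpos hs₀.1.le h
        rw [hPhi0] at h2
        linarith
end
end

section
/- For every θ ∈ [0, π/2) and ξ = (sinθ, cosθ), the point (β, α) = (√(λ/d), 0) belongs to S(c) ∩ G(c) for c = c_K/cosθ; consequently w_*(θ) ≤ c_K/cosθ. -/
open Real Set

noncomputable section

theorem statement18
    (d D μ ν lam : ℝ) (hd : 0 < d) (hD : 0 < D) (hμ : 0 < μ) (hν : 0 < ν)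
    (hlam : 0 < lam) :
    ∀ θ ∈ Ico (0:ℝ) (π/2),
      (Real.sqrt (lam / d), (0:ℝ)) ∈
        Sset d D μ ν (Real.sin θ) (Real.cos θ) (2 * Real.sqrt (d * lam) / Real.cos θ) ∩
        Gset d lam (Real.sin θ) (Real.cos θ) (2 * Real.sqrt (d * lam) / Real.cos θ) ∧
      wstar d D μ ν lam (Real.sin θ) (Real.cos θ) ≤
        2 * Real.sqrt (d * lam) / Real.cos θ := by
  intro θ hθ
  obtain ⟨hθ0, hθ1⟩ := hθ
  have hcos : 0 < Real.cos θ := Real.cos_pos_of_mem_Ioo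
    ⟨lt_of_lt_of_le (by linarith [Real.pi_pos]) hθ0, hθ1⟩
  set β := Real.sqrt (lam / d) with hβ
  have hβ0 : 0 ≤ β := Real.sqrt_nonneg _
  have hc0 : 0 < 2 * Real.sqrt (d * lam) / Real.cos θ := by
    apply div_pos _ hcos
    have : 0 < Real.sqrt (d * lam) := Real.sqrt_pos.mpr (by positivity)
    linarith
  set c := 2 * Real.sqrt (d * lam) / Real.cos θ with hc
  -- key identity: c * cos θ * β = 2 * lam
  have hkey : c * Real.cos θ * β = 2 * lam := by
    have h1 : c * Real.cos θ = 2 * Real.sqrt (d * lam) := by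
      rw [hc, div_mul_cancel₀ _ hcos.ne']
    rw [h1, hβ, mul_assoc, ← Real.sqrt_mul (by positivity) (lam / d)]
    have : d * lam * (lam / d) = lam ^ 2 := by field_simp
    rw [this, Real.sqrt_sq hlam.le]
  have hβsq : d * β ^ 2 = lam := by
    rw [hβ, Real.sq_sqrt (by positivity)]
    field_simp
  have hmem : (β, (0:ℝ)) ∈
      Sset d D μ ν (Real.sin θ) (Real.cos θ) c ∩ Gset d lam (Real.sin θ) (Real.cos θ) c := by
    constructor
    · refine ⟨lt_of_lt_of_le (neg_lt_zero.mpr (by positivity)) hβ0, ?_⟩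
      have hchi : 0 ≤ chiF μ ν (d * β) := by
        unfold chiF
        apply div_nonneg (by nlinarith) (by nlinarith)
      have hcb : 0 ≤ c * Real.cos θ * β := by
        rw [hkey]; linarith
      simp only
      nlinarith
    · simp only [Gset, mem_setOf_eq]
      nlinarith
  refine ⟨hmem, ?_⟩
  apply csInf_le
  · exact ⟨0, fun x hx => hx.1.le⟩
  · exact ⟨hc0, ⟨(β, 0), hmem⟩⟩
end
end
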